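/- Fix N, M, R ≥ 1, B > 0, and 0 < α ≤ B√(NM), and let L = { Θ ∈ ℝ^{N×M} : rank(Θ) ≤ R and θ_{ui} ∈ [0,B] for all u, i }. There exists a finite set L^α ⊆ ℝ^{N×M} with cardinality |L^α| ≤ ( 9B√(NM)/α )^{(N+M+1)R} such that every Θ ∈ L is within Frobenius distance α of some element of L^α; equivalently, the α-covering number of L in the Frobenius norm satisfies log N(L, α, ‖·‖_F) ≤ (N+M+1) R log( 9B√(NM)/α ). -/

import Mathlib

open Finset

/-- Frobenius norm of a real matrix, `‖Θ‖_F = √(Σ_{u,i} θ_{ui}²)`. -/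
noncomputable def frobNorm {N M : ℕ} (Θ : Matrix (Fin N) (Fin M) ℝ) : ℝ :=
  Real.sqrt (∑ u, ∑ i, Θ u i ^ 2)


open MeasureTheory Metric Module Finset

lemma exists_net (ι : Type) [Fintype ι] [Nonempty ι]
    (S : Set (EuclideanSpace ℝ ι)) (r ε : ℝ) (hr : 0 ≤ r) (hε : 0 < ε)
    (hS : S ⊆ closedBall 0 r) :
    ∃ T : Finset (EuclideanSpace ℝ ι), ↑T ⊆ S ∧
      (T.card : ℝ) ≤ (2 * r / ε + 1) ^ (Fintype.card ι) ∧
      ∀ s ∈ S, ∃ t ∈ T, dist s t ≤ ε := by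
  classical
  set d := Fintype.card ι with hd
  have hdim : finrank ℝ (EuclideanSpace ℝ ι) = d := finrank_euclideanSpace
  set K : ℝ := (2 * r / ε + 1) ^ d with hK
  set c : ENNReal := volume (ball (0 : EuclideanSpace ℝ ι) 1) with hc
  have hc0 : c ≠ 0 := (measure_ball_pos volume 0 one_pos).ne'
  have hctop : c ≠ ⊤ := measure_ball_lt_top.ne
  have key : ∀ T : Finset (EuclideanSpace ℝ ι), ↑T ⊆ S →
      ((T : Set (EuclideanSpace ℝ ι)).Pairwise fun x y => ε < dist x y) →
      (T.card : ℝ) ≤ K := by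
    intro T hTS hsep
    have hdisj : (T : Set (EuclideanSpace ℝ ι)).PairwiseDisjoint fun t => ball t (ε / 2) := by
      intro x hx y hy hxy
      refine Set.disjoint_left.2 fun z hzx hzy => ?_
      have hlt : dist x y < ε := by
        rw [mem_ball] at hzx hzy
        have h1 : dist x z < ε / 2 := by simpa [dist_comm] using hzx
        have h2 : dist z y < ε / 2 := by simpa [dist_comm] using hzy
        calc dist x y ≤ dist x z + dist z y := dist_triangle _ _ _
          _ < ε / 2 + ε / 2 := by linarith
          _ = ε := by ring
      exact absurd hlt (not_lt.2 (hsep hx hy hxy).le)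
    have hsum : ∑ t ∈ T, volume (ball t (ε / 2)) = volume (⋃ t ∈ T, ball t (ε / 2)) :=
      (measure_biUnion_finset hdisj fun t _ => measurableSet_ball).symm
    have hsub : (⋃ t ∈ T, ball t (ε / 2)) ⊆ ball (0 : EuclideanSpace ℝ ι) (r + ε / 2) := by
      intro z hz
      simp only [Set.mem_iUnion] at hz
      obtain ⟨t, ht, hzt⟩ := hz
      have htr : dist t 0 ≤ r := hS (hTS ht)
      rw [mem_ball] at hzt ⊢
      calc dist z 0 ≤ dist z t + dist t 0 := dist_triangle _ _ _
        _ < ε / 2 + r := by linarith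
        _ = r + ε / 2 := by ring
    have hballt : ∀ t : EuclideanSpace ℝ ι,
        volume (ball t (ε / 2)) = ENNReal.ofReal ((ε / 2) ^ d) * c := by
      intro t
      rw [hc, ← hdim]
      exact Measure.addHaar_ball volume t (by linarith)
    have hbig : volume (ball (0 : EuclideanSpace ℝ ι) (r + ε / 2))
        = ENNReal.ofReal ((r + ε / 2) ^ d) * c := by
      rw [hc, ← hdim]; exact Measure.addHaar_ball volume 0 (by linarith)
    have hineq : (T.card : ENNReal) * ENNReal.ofReal ((ε / 2) ^ d) * c ≤
        ENNReal.ofReal ((r + ε / 2) ^ d) * c := by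
      rw [mul_assoc]
      calc (T.card : ENNReal) * (ENNReal.ofReal ((ε / 2) ^ d) * c)
          = ∑ t ∈ T, volume (ball t (ε / 2)) := by
            rw [Finset.sum_congr rfl fun t _ => hballt t, Finset.sum_const, nsmul_eq_mul]
        _ = volume (⋃ t ∈ T, ball t (ε / 2)) := hsum
        _ ≤ volume (ball (0 : EuclideanSpace ℝ ι) (r + ε / 2)) := measure_mono hsub
        _ = ENNReal.ofReal ((r + ε / 2) ^ d) * c := hbig
    rw [ENNReal.mul_le_mul_iff_left hc0 hctop] at hineq
    have h2 : ENNReal.ofReal ((T.card : ℝ) * (ε / 2) ^ d) ≤ ENNReal.ofReal ((r + ε / 2) ^ d) := by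
      rwa [ENNReal.ofReal_mul (by positivity), ENNReal.ofReal_natCast]
    have h3 : (T.card : ℝ) * (ε / 2) ^ d ≤ (r + ε / 2) ^ d :=
      le_trans (le_of_eq rfl) ((ENNReal.ofReal_le_ofReal_iff (by positivity)).1 h2)
    have hε2 : (0:ℝ) < (ε / 2) ^ d := by positivity
    have h4 : (T.card : ℝ) ≤ ((r + ε / 2) / (ε / 2)) ^ d := by
      rw [div_pow, le_div_iff₀ hε2]; exact h3
    have h5 : (r + ε / 2) / (ε / 2) = 2 * r / ε + 1 := by
      field_simp
    rwa [h5] at h4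
  -- take a maximal separated set
  have hKnn : (0:ℝ) ≤ K := by positivity
  set C : Set ℕ := {n | ∃ T : Finset (EuclideanSpace ℝ ι), (↑T ⊆ S ∧
      (T : Set (EuclideanSpace ℝ ι)).Pairwise fun x y => ε < dist x y) ∧ T.card = n} with hC
  have h0 : 0 ∈ C := ⟨∅, ⟨by simp, by simp⟩, by simp⟩
  have hbdd : BddAbove C := by
    refine ⟨⌈K⌉₊, fun n hn => ?_⟩
    obtain ⟨T, ⟨h1, h2⟩, h3⟩ := hn
    have := key T h1 h2
    rw [h3] at this
    exact_mod_cast this.trans (Nat.le_ceil K)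
  obtain ⟨T₀, ⟨hT₀S, hT₀sep⟩, hT₀card⟩ := Nat.sSup_mem ⟨0, h0⟩ hbdd
  refine ⟨T₀, hT₀S, ?_, ?_⟩
  · exact key T₀ hT₀S hT₀sep
  · intro s hs
    by_contra hcon
    push_neg at hcon
    have hsnotin : s ∉ T₀ := fun h => absurd (hcon s h) (by simp [not_lt, dist_self]; linarith)
    have hsep' : ((insert s T₀ : Finset (EuclideanSpace ℝ ι)) : Set (EuclideanSpace ℝ ι)).Pairwise
        fun x y => ε < dist x y := by
      intro x hx y hy hxy
      simp only [Finset.coe_insert, Set.mem_insert_iff, Finset.mem_coe] at hx hy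
      rcases hx with rfl | hx
      · rcases hy with rfl | hy
        · exact absurd rfl hxy
        · exact hcon y hy
      · rcases hy with rfl | hy
        · rw [dist_comm]; exact hcon x hx
        · exact hT₀sep hx hy hxy
    have hmem : T₀.card + 1 ∈ C := by
      refine ⟨insert s T₀, ⟨?_, hsep'⟩, ?_⟩
      · intro x hx
        simp only [Finset.coe_insert, Set.mem_insert_iff, Finset.mem_coe] at hx
        rcases hx with rfl | hx
        · exact hs
        · exact hT₀S hx
      · rw [Finset.card_insert_of_notMem hsnotin]
    have : T₀.card + 1 ≤ sSup C := le_csSup hbdd hmem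
    omega
open Finset


/-- matrices to Euclidean space -/
def toE {a b : ℕ} (A : Matrix (Fin a) (Fin b) ℝ) : EuclideanSpace ℝ (Fin a × Fin b) :=
  WithLp.toLp 2 (fun p : Fin a × Fin b => A p.1 p.2)

lemma toE_sub {a b : ℕ} (A B : Matrix (Fin a) (Fin b) ℝ) : toE (A - B) = toE A - toE B := rfl

lemma norm_toE {a b : ℕ} (A : Matrix (Fin a) (Fin b) ℝ) :
    ‖toE A‖ = Real.sqrt (∑ u, ∑ i, A u i ^ 2) := by
  rw [EuclideanSpace.norm_eq]
  congr 1
  rw [Fintype.sum_prod_type]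
  refine Finset.sum_congr rfl fun u _ => Finset.sum_congr rfl fun i _ => ?_
  simp [toE, sq_abs]

lemma frobNorm_eq {a b : ℕ} (A : Matrix (Fin a) (Fin b) ℝ) : frobNorm A = ‖toE A‖ :=
  (norm_toE A).symm

lemma frobNorm_nonneg {a b : ℕ} (A : Matrix (Fin a) (Fin b) ℝ) : 0 ≤ frobNorm A := by
  rw [frobNorm_eq]; exact norm_nonneg _

lemma frobNorm_sq {a b : ℕ} (A : Matrix (Fin a) (Fin b) ℝ) :
    frobNorm A ^ 2 = ∑ u, ∑ i, A u i ^ 2 := by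
  rw [frobNorm]
  exact Real.sq_sqrt (by positivity)

lemma frobNorm_le_of_sq {a b : ℕ} (A : Matrix (Fin a) (Fin b) ℝ) {c : ℝ} (hc : 0 ≤ c)
    (h : ∑ u, ∑ i, A u i ^ 2 ≤ c ^ 2) : frobNorm A ≤ c := by
  rw [frobNorm]
  calc Real.sqrt (∑ u, ∑ i, A u i ^ 2) ≤ Real.sqrt (c ^ 2) := Real.sqrt_le_sqrt h
    _ = c := Real.sqrt_sq hc

/-- expansion of the squared Frobenius norm of a product -/
lemma frob_mul_expand {a R b : ℕ} (X : Matrix (Fin a) (Fin R) ℝ) (W : Matrix (Fin R) (Fin b) ℝ) :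
    ∑ u, ∑ i, ((X * W) u i) ^ 2
      = ∑ j, ∑ k, (∑ u, X u j * X u k) * (∑ i, W j i * W k i) := by
  have step1 : ∀ (u : Fin a) (i : Fin b),
      ((X * W) u i) ^ 2 = ∑ j, ∑ k, (X u j * X u k) * (W j i * W k i) := by
    intro u i
    rw [Matrix.mul_apply, sq, Finset.sum_mul_sum]
    refine Finset.sum_congr rfl fun j _ => Finset.sum_congr rfl fun k _ => by ring
  calc ∑ u, ∑ i, ((X * W) u i) ^ 2
      = ∑ u, ∑ i, ∑ j, ∑ k, (X u j * X u k) * (W j i * W k i) := by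
        exact Finset.sum_congr rfl fun u _ => Finset.sum_congr rfl fun i _ => step1 u i
    _ = ∑ u, ∑ j, ∑ i, ∑ k, (X u j * X u k) * (W j i * W k i) :=
        Finset.sum_congr rfl fun u _ => Finset.sum_comm
    _ = ∑ u, ∑ j, ∑ k, ∑ i, (X u j * X u k) * (W j i * W k i) :=
        Finset.sum_congr rfl fun u _ => Finset.sum_congr rfl fun j _ => Finset.sum_comm
    _ = ∑ j, ∑ u, ∑ k, ∑ i, (X u j * X u k) * (W j i * W k i) := Finset.sum_comm
    _ = ∑ j, ∑ k, ∑ u, ∑ i, (X u j * X u k) * (W j i * W k i) :=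
        Finset.sum_congr rfl fun j _ => Finset.sum_comm
    _ = ∑ j, ∑ k, (∑ u, X u j * X u k) * (∑ i, W j i * W k i) := by
        refine Finset.sum_congr rfl fun j _ => Finset.sum_congr rfl fun k _ => ?_
        rw [Finset.sum_mul_sum]
    
/-- if the rows of `W` are pairwise orthogonal -/
lemma frob_mul_sq_rows {a R b : ℕ} (X : Matrix (Fin a) (Fin R) ℝ) (W : Matrix (Fin R) (Fin b) ℝ)
    (hW : ∀ j k, j ≠ k → ∑ i, W j i * W k i = 0) :
    ∑ u, ∑ i, ((X * W) u i) ^ 2 = ∑ j, (∑ u, X u j ^ 2) * (∑ i, W j i ^ 2) := by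
  rw [frob_mul_expand]
  refine Finset.sum_congr rfl fun j _ => ?_
  rw [Finset.sum_eq_single j]
  · simp [sq]
  · intro k _ hkj
    rw [hW j k (Ne.symm hkj), mul_zero]
  · intro h; exact absurd (Finset.mem_univ j) h

/-- if the columns of `X` are pairwise orthogonal -/
lemma frob_mul_sq_cols {a R b : ℕ} (X : Matrix (Fin a) (Fin R) ℝ) (W : Matrix (Fin R) (Fin b) ℝ)
    (hX : ∀ j k, j ≠ k → ∑ u, X u j * X u k = 0) :
    ∑ u, ∑ i, ((X * W) u i) ^ 2 = ∑ j, (∑ u, X u j ^ 2) * (∑ i, W j i ^ 2) := by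
  rw [frob_mul_expand]
  refine Finset.sum_congr rfl fun j _ => ?_
  rw [Finset.sum_eq_single j]
  · simp [sq]
  · intro k _ hkj
    rw [hX j k (Ne.symm hkj), zero_mul]
  · intro h; exact absurd (Finset.mem_univ j) h
open Finset Matrix

lemma exists_factorization {N M : ℕ} (R : ℕ) (Θ : Matrix (Fin N) (Fin M) ℝ)
    (hrank : Θ.rank ≤ R) :
    ∃ (A : Matrix (Fin N) (Fin R) ℝ) (W : Matrix (Fin R) (Fin M) ℝ),
      Θ = A * W ∧
      (∀ j k, j ≠ k → ∑ u, A u j * A u k = 0) ∧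
      (∑ j, ∑ u, A u j ^ 2 ≤ ∑ u, ∑ i, Θ u i ^ 2) ∧
      (∀ j k, j ≠ k → ∑ i, W j i * W k i = 0) ∧
      (∀ j, ∑ i, W j i ^ 2 ≤ 1) := by
  classical
  have hG : (Θᵀ * Θ).IsHermitian := by
    have h := Matrix.isHermitian_conjTranspose_mul_self Θ
    have : Θᴴ = Θᵀ := by ext u i; simp [Matrix.conjTranspose_apply]
    rwa [this] at h
  set v : Fin M → Fin M → ℝ := fun k => ⇑(hG.eigenvectorBasis k) with hv
  have heig : ∀ k, (Θᵀ * Θ) *ᵥ v k = hG.eigenvalues k • v k := fun k =>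
    hG.mulVec_eigenvectorBasis k
  set U : Matrix (Fin M) (Fin M) ℝ := (hG.eigenvectorUnitary : Matrix (Fin M) (Fin M) ℝ) with hU
  have hUk : ∀ i k, U i k = v k i := fun i k => rfl
  have hsUU : star U * U = 1 := Unitary.coe_star_mul_self hG.eigenvectorUnitary
  have hUsU : U * star U = 1 := Unitary.coe_mul_star_self hG.eigenvectorUnitary
  have hortho : ∀ k l, ∑ i, v k i * v l i = if k = l then 1 else 0 := by
    intro k l
    have h := congrFun (congrFun hsUU k) l
    simp only [Matrix.mul_apply, Matrix.one_apply, Matrix.star_apply, star_trivial] at h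
    rw [← h]
    exact Finset.sum_congr rfl fun i _ => by rw [hUk i k, hUk i l]
  have hcomp : ∀ j i, ∑ k, v k j * v k i = if j = i then 1 else 0 := by
    intro j i
    have h := congrFun (congrFun hUsU j) i
    simp only [Matrix.mul_apply, Matrix.one_apply, Matrix.star_apply, star_trivial] at h
    rw [← h]
    exact Finset.sum_congr rfl fun k _ => by rw [hUk j k, hUk i k]
  set a : Fin M → Fin N → ℝ := fun k => Θ *ᵥ v k with ha
  have ha_app : ∀ k u, a k u = ∑ j, Θ u j * v k j := by
    intro k u; simp [ha, Matrix.mulVec, dotProduct]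
  have ha_orth : ∀ k l, k ≠ l → ∑ u, a k u * a l u = 0 := by
    intro k l hkl
    have h1 : ∑ u, a k u * a l u = v k ⬝ᵥ ((Θᵀ * Θ) *ᵥ v l) := by
      rw [← Matrix.mulVec_mulVec, Matrix.dotProduct_mulVec, Matrix.vecMul_transpose]
      rfl
    rw [h1, heig l, dotProduct_smul]
    have h2 : v k ⬝ᵥ v l = 0 := by
      have := hortho k l
      rw [if_neg hkl] at this
      simpa [dotProduct] using this
    rw [h2, smul_zero]
  have hfull : ∀ u i, ∑ k, a k u * v k i = Θ u i := by
    intro u i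
    calc ∑ k, a k u * v k i = ∑ k, ∑ j, (Θ u j * v k j) * v k i := by
          refine Finset.sum_congr rfl fun k _ => ?_
          rw [ha_app, Finset.sum_mul]
      _ = ∑ j, ∑ k, (Θ u j * v k j) * v k i := Finset.sum_comm
      _ = ∑ j, Θ u j * ∑ k, v k j * v k i := by
          refine Finset.sum_congr rfl fun j _ => ?_
          rw [Finset.mul_sum]
          exact Finset.sum_congr rfl fun k _ => by ring
      _ = ∑ j, Θ u j * (if j = i then 1 else 0) := by
          exact Finset.sum_congr rfl fun j _ => by rw [hcomp]
      _ = Θ u i := by simp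
  have hsumfull : ∑ k, ∑ u, a k u ^ 2 = ∑ u, ∑ i, Θ u i ^ 2 := by
    calc ∑ k, ∑ u, a k u ^ 2
        = ∑ u, ∑ k, a k u ^ 2 := Finset.sum_comm
      _ = ∑ u, ∑ k, ∑ j, ∑ i, (Θ u j * Θ u i) * (v k j * v k i) := by
          refine Finset.sum_congr rfl fun u _ => Finset.sum_congr rfl fun k _ => ?_
          rw [sq, ha_app, Finset.sum_mul_sum]
          exact Finset.sum_congr rfl fun j _ => Finset.sum_congr rfl fun i _ => by ring
      _ = ∑ u, ∑ j, ∑ k, ∑ i, (Θ u j * Θ u i) * (v k j * v k i) :=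
          Finset.sum_congr rfl fun u _ => Finset.sum_comm
      _ = ∑ u, ∑ j, ∑ i, ∑ k, (Θ u j * Θ u i) * (v k j * v k i) :=
          Finset.sum_congr rfl fun u _ => Finset.sum_congr rfl fun j _ => Finset.sum_comm
      _ = ∑ u, ∑ j, ∑ i, (Θ u j * Θ u i) * ∑ k, v k j * v k i := by
          refine Finset.sum_congr rfl fun u _ => Finset.sum_congr rfl fun j _ =>
            Finset.sum_congr rfl fun i _ => ?_
          rw [Finset.mul_sum]
      _ = ∑ u, ∑ j, ∑ i, (Θ u j * Θ u i) * (if j = i then 1 else 0) := by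
          refine Finset.sum_congr rfl fun u _ => Finset.sum_congr rfl fun j _ =>
            Finset.sum_congr rfl fun i _ => ?_
          rw [hcomp]
      _ = ∑ u, ∑ i, Θ u i ^ 2 := by
          refine Finset.sum_congr rfl fun u _ => ?_
          simp [mul_ite, sq]
  -- the set of indices with nonzero image
  have hcard : Fintype.card {k : Fin M // a k ≠ 0} ≤ R := by
    have hne : ∀ k : {k : Fin M // a k ≠ 0},
        ((WithLp.equiv 2 (Fin N → ℝ)).symm (a k.1) : EuclideanSpace ℝ (Fin N)) ≠ 0 := by
      intro k h
      exact k.2 (by simpa using congrArg (WithLp.equiv 2 (Fin N → ℝ)) h)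
    have hin : ∀ k l : {k : Fin M // a k ≠ 0}, k ≠ l →
        (inner ℝ ((WithLp.equiv 2 (Fin N → ℝ)).symm (a k.1))
          ((WithLp.equiv 2 (Fin N → ℝ)).symm (a l.1)) : ℝ) = 0 := by
      intro k l hkl
      have hkl' : k.1 ≠ l.1 := fun h => hkl (Subtype.ext h)
      have := ha_orth k.1 l.1 hkl'
      simpa [PiLp.inner_apply, mul_comm] using this
    have hli : LinearIndependent ℝ
        (fun k : {k : Fin M // a k ≠ 0} =>
          ((WithLp.equiv 2 (Fin N → ℝ)).symm (a k.1) : EuclideanSpace ℝ (Fin N))) :=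
      linearIndependent_of_ne_zero_of_inner_eq_zero hne hin
    have hli2 : LinearIndependent ℝ (fun k : {k : Fin M // a k ≠ 0} => a k.1) := by
      have h := hli.map' (WithLp.linearEquiv 2 ℝ (Fin N → ℝ)).toLinearMap
        (LinearEquiv.ker _)
      exact h
    set V := LinearMap.range Θ.mulVecLin with hV
    have hmem : ∀ k : {k : Fin M // a k ≠ 0}, a k.1 ∈ V := fun k => ⟨v k.1, rfl⟩
    have hb : LinearIndependent ℝ (fun k : {k : Fin M // a k ≠ 0} => (⟨a k.1, hmem k⟩ : V)) := by
      apply LinearIndependent.of_comp V.subtype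
      exact hli2
    have := hb.fintype_card_le_finrank
    calc Fintype.card {k : Fin M // a k ≠ 0} ≤ Module.finrank ℝ V := this
      _ = Θ.rank := rfl
      _ ≤ R := hrank
  obtain ⟨e⟩ : Nonempty ({k : Fin M // a k ≠ 0} ↪ Fin R) :=
    Function.Embedding.nonempty_iff_card_le.mpr (by simpa using hcard)
  set m : Fin R → Option {k : Fin M // a k ≠ 0} := fun j =>
    if h : ∃ s : {k : Fin M // a k ≠ 0}, e s = j then some h.choose else none with hm
  have hm1 : ∀ s : {k : Fin M // a k ≠ 0}, m (e s) = some s := by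
    intro s
    have hex : ∃ t : {k : Fin M // a k ≠ 0}, e t = e s := ⟨s, rfl⟩
    rw [hm]
    simp only [dif_pos hex]
    exact congrArg some (e.injective hex.choose_spec)
  have hm2 : ∀ (j : Fin R) (s : {k : Fin M // a k ≠ 0}), m j = some s → e s = j := by
    intro j s hjs
    rw [hm] at hjs
    by_cases h : ∃ t : {k : Fin M // a k ≠ 0}, e t = j
    · simp only [dif_pos h] at hjs
      obtain rfl : h.choose = s := Option.some_injective _ hjs
      exact h.choose_spec
    · simp only [dif_neg h] at hjs
      exact absurd hjs (by simp)
  -- key summation helper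
  have hsumhelp : ∀ f : {k : Fin M // a k ≠ 0} → ℝ,
      ∑ j : Fin R, ((m j).elim 0 fun s => f s) = ∑ s : {k : Fin M // a k ≠ 0}, f s := by
    intro f
    have h1 : ∑ s : {k : Fin M // a k ≠ 0}, f s
        = ∑ j ∈ Finset.univ.image (fun s => e s), ((m j).elim 0 fun s => f s) := by
      rw [Finset.sum_image (fun x _ y _ h => e.injective h)]
      refine Finset.sum_congr rfl fun s _ => ?_
      rw [hm1 s]
      rfl
    rw [h1]
    refine (Finset.sum_subset (Finset.subset_univ _) ?_).symm
    intro j _ hj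
    cases hmj : m j with
    | none => rfl
    | some s =>
      exact absurd (Finset.mem_image.mpr ⟨s, Finset.mem_univ s, hm2 j s hmj⟩) hj
  set A : Matrix (Fin N) (Fin R) ℝ :=
    Matrix.of fun u j => (m j).elim 0 fun s => a s.1 u with hA
  set W : Matrix (Fin R) (Fin M) ℝ :=
    Matrix.of fun j i => (m j).elim 0 fun s => v s.1 i with hW
  have hAW : ∀ (u : Fin N) (j : Fin R) (i : Fin M),
      A u j * W j i = (m j).elim 0 fun s => a s.1 u * v s.1 i := by
    intro u j i
    cases hmj : m j with
    | none => simp [hA, hW, hmj]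
    | some s => simp [hA, hW, hmj]
  refine ⟨A, W, ?_, ?_, ?_, ?_, ?_⟩
  · -- Θ = A * W
    ext u i
    symm
    rw [Matrix.mul_apply]
    calc ∑ j, A u j * W j i = ∑ j, ((m j).elim 0 fun s => a s.1 u * v s.1 i) :=
          Finset.sum_congr rfl fun j _ => hAW u j i
      _ = ∑ s : {k : Fin M // a k ≠ 0}, a s.1 u * v s.1 i := hsumhelp _
      _ = ∑ k ∈ Finset.univ.filter (fun k => a k ≠ 0), a k u * v k i :=
          (Finset.sum_subtype (p := fun k => a k ≠ 0)
            (Finset.univ.filter fun k => a k ≠ 0) (fun x => by simp)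
            (fun k => a k u * v k i)).symm
      _ = ∑ k, a k u * v k i := by
          apply Finset.sum_subset (Finset.filter_subset _ _)
          intro k _ hk
          simp only [Finset.mem_filter, Finset.mem_univ, true_and, not_not] at hk
          rw [hk]
          simp
      _ = Θ u i := hfull u i
  · -- columns of A orthogonal
    intro j k hjk
    cases hmj : m j with
    | none => simp [hA, hmj]
    | some s =>
      cases hmk : m k with
      | none => simp [hA, hmk]
      | some t =>
        have hst : s.1 ≠ t.1 := by
          intro h
          have : s = t := Subtype.ext h
          subst this
          exact hjk ((hm2 j s hmj).symm.trans (hm2 k s hmk))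
        simp only [hA, Matrix.of_apply, hmj, hmk, Option.elim_some]
        exact ha_orth s.1 t.1 hst
  · -- Frobenius bound for A
    have h1 : ∑ j, ∑ u, A u j ^ 2
        = ∑ s : {k : Fin M // a k ≠ 0}, ∑ u, a s.1 u ^ 2 := by
      rw [← hsumhelp (fun s => ∑ u, a s.1 u ^ 2)]
      refine Finset.sum_congr rfl fun j _ => ?_
      cases hmj : m j with
      | none => simp [hA, hmj]
      | some s => simp [hA, hmj]
    rw [h1]
    calc ∑ s : {k : Fin M // a k ≠ 0}, ∑ u, a s.1 u ^ 2
        = ∑ k ∈ Finset.univ.filter (fun k => a k ≠ 0), ∑ u, a k u ^ 2 :=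
          (Finset.sum_subtype (p := fun k => a k ≠ 0)
            (Finset.univ.filter fun k => a k ≠ 0) (fun x => by simp)
            (fun k => ∑ u, a k u ^ 2)).symm
      _ ≤ ∑ k, ∑ u, a k u ^ 2 := by
          apply Finset.sum_le_sum_of_subset_of_nonneg (Finset.filter_subset _ _)
          intro k _ _
          positivity
      _ = ∑ u, ∑ i, Θ u i ^ 2 := hsumfull
  · -- rows of W orthogonal
    intro j k hjk
    cases hmj : m j with
    | none => simp [hW, hmj]
    | some s =>
      cases hmk : m k with
      | none => simp [hW, hmk]
      | some t =>
        have hst : s.1 ≠ t.1 := by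
          intro h
          have : s = t := Subtype.ext h
          subst this
          exact hjk ((hm2 j s hmj).symm.trans (hm2 k s hmk))
        simp only [hW, Matrix.of_apply, hmj, hmk, Option.elim_some]
        have := hortho s.1 t.1
        rwa [if_neg hst] at this
  · -- rows of W have norm at most 1
    intro j
    cases hmj : m j with
    | none => simp [hW, hmj]
    | some s =>
      simp only [hW, Matrix.of_apply, hmj, Option.elim_some]
      have := hortho s.1 s.1
      rw [if_pos rfl] at this
      calc ∑ i, v s.1 i ^ 2 = ∑ i, v s.1 i * v s.1 i := by
            exact Finset.sum_congr rfl fun i _ => sq (v s.1 i) ▸ by ring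
        _ = 1 := this
        _ ≤ 1 := le_refl 1

def fromE {a b : ℕ} (x : EuclideanSpace ℝ (Fin a × Fin b)) : Matrix (Fin a) (Fin b) ℝ :=
  Matrix.of fun u j => x (u, j)

lemma fromE_toE {a b : ℕ} (A : Matrix (Fin a) (Fin b) ℝ) : fromE (toE A) = A := rfl

def rowsOf {R M : ℕ} (f : Fin R → EuclideanSpace ℝ (Fin M)) : Matrix (Fin R) (Fin M) ℝ :=
  Matrix.of fun j i => f j i

/-- Lemma 14 of the paper (covering number for low-rank matrices): for the structure set
`L = {Θ ∈ ℝ^{N×M} : rank Θ ≤ R, θ_{ui} ∈ [0,B]}` and `0 < α ≤ B√(NM)`, there is an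
`α`-net `L^α` of `L` in the Frobenius norm with `|L^α| ≤ (9B√(NM)/α)^{(N+M+1)R}`;
equivalently `log N(L, α, ‖·‖_F) ≤ (N+M+1) R log(9B√(NM)/α)`. -/
theorem low_rank_structure_set_covering
    (N M R : ℕ) (hN : 1 ≤ N) (hM : 1 ≤ M) (hR : 1 ≤ R)
    (B α : ℝ) (hB : 0 < B) (hα0 : 0 < α) (hα1 : α ≤ B * Real.sqrt (N * M)) :
    ∃ Lα : Finset (Matrix (Fin N) (Fin M) ℝ),
      (Lα.card : ℝ) ≤ (9 * B * Real.sqrt (N * M) / α) ^ ((N + M + 1) * R) ∧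
      ∀ Θ : Matrix (Fin N) (Fin M) ℝ, Θ.rank ≤ R →
        (∀ u i, Θ u i ∈ Set.Icc (0 : ℝ) B) →
        ∃ Θ' ∈ Lα, frobNorm (Θ - Θ') ≤ α := by
  classical
  haveI : Nonempty (Fin N) := ⟨⟨0, hN⟩⟩
  haveI : Nonempty (Fin M) := ⟨⟨0, hM⟩⟩
  haveI : Nonempty (Fin R) := ⟨⟨0, hR⟩⟩
  set D : ℝ := B * Real.sqrt (N * M) with hD
  have hNM : (0:ℝ) < (N : ℝ) * (M : ℝ) := by
    have h1 : (1:ℝ) ≤ (N:ℝ) := by exact_mod_cast hN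
    have h2 : (1:ℝ) ≤ (M:ℝ) := by exact_mod_cast hM
    nlinarith
  have hD0 : 0 < D := mul_pos hB (Real.sqrt_pos.mpr hNM)
  have hαD : α ≤ D := hα1
  set Q : ℝ := 9 * B * Real.sqrt (N * M) / α with hQ
  have hQD : Q = 9 * D / α := by rw [hQ, hD]; ring_nf
  have hQ1 : 1 ≤ Q := by
    rw [hQD, le_div_iff₀ hα0]
    nlinarith
  -- the structure set for the left factor
  set SA : Set (Matrix (Fin N) (Fin R) ℝ) :=
    {A | (∀ j k, j ≠ k → ∑ u, A u j * A u k = 0) ∧ ∑ j, ∑ u, A u j ^ 2 ≤ D ^ 2} with hSA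
  have hSAsub : toE '' SA ⊆ Metric.closedBall 0 D := by
    rintro x ⟨A, hA, rfl⟩
    rw [Metric.mem_closedBall, dist_zero_right, ← frobNorm_eq]
    apply frobNorm_le_of_sq _ hD0.le
    rw [← Finset.sum_comm]
    exact hA.2
  obtain ⟨TA, hTAsub, hTAcard, hTAnet⟩ := exists_net (Fin N × Fin R) (toE '' SA) D (α/2)
    hD0.le (by positivity) hSAsub
  obtain ⟨TV, hTVsub, hTVcard, hTVnet⟩ := exists_net (Fin M)
    (Metric.closedBall 0 1) 1 (α/(2*D)) zero_le_one (by positivity) subset_rfl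
  set Lα : Finset (Matrix (Fin N) (Fin M) ℝ) :=
    (TA ×ˢ (Fintype.piFinset fun _ : Fin R => TV)).image
      (fun p => fromE p.1 * rowsOf p.2) with hLα
  refine ⟨Lα, ?_, ?_⟩
  · -- cardinality bound
    have hcard1 : (Lα.card : ℝ) ≤ (TA.card : ℝ) * (TV.card : ℝ) ^ R := by
      calc (Lα.card : ℝ) ≤ ((TA ×ˢ (Fintype.piFinset fun _ : Fin R => TV)).card : ℝ) := by
            exact_mod_cast Finset.card_image_le
        _ = (TA.card : ℝ) * (TV.card : ℝ) ^ R := by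
            rw [Finset.card_product, Fintype.card_piFinset]
            push_cast
            simp
    have hb1 : 2 * D / (α/2) + 1 ≤ Q := by
      rw [hQD]
      have h1 : 2 * D / (α/2) = 4 * D / α := by
        field_simp
        ring
      rw [h1, div_add' _ _ _ hα0.ne', div_le_div_iff_of_pos_right hα0]
      linarith
    have hb2 : 2 * 1 / (α/(2*D)) + 1 ≤ Q := by
      rw [hQD]
      have h1 : 2 * 1 / (α/(2*D)) = 4 * D / α := by
        field_simp
        ring
      rw [h1, div_add' _ _ _ hα0.ne', div_le_div_iff_of_pos_right hα0]
      linarith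
    have hbnn1 : (0:ℝ) ≤ 2 * D / (α/2) + 1 := by positivity
    have hbnn2 : (0:ℝ) ≤ 2 * 1 / (α/(2*D)) + 1 := by positivity
    have hTA' : (TA.card : ℝ) ≤ Q ^ (N * R) := by
      calc (TA.card : ℝ) ≤ (2 * D / (α/2) + 1) ^ (Fintype.card (Fin N × Fin R)) := hTAcard
        _ ≤ Q ^ (Fintype.card (Fin N × Fin R)) := pow_le_pow_left₀ hbnn1 hb1 _
        _ = Q ^ (N * R) := by rw [Fintype.card_prod, Fintype.card_fin, Fintype.card_fin]
    have hTV' : (TV.card : ℝ) ≤ Q ^ M := by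
      calc (TV.card : ℝ) ≤ (2 * 1 / (α/(2*D)) + 1) ^ (Fintype.card (Fin M)) := hTVcard
        _ ≤ Q ^ (Fintype.card (Fin M)) := pow_le_pow_left₀ hbnn2 hb2 _
        _ = Q ^ M := by rw [Fintype.card_fin]
    have hQnn : (0:ℝ) ≤ Q := le_trans zero_le_one hQ1
    calc (Lα.card : ℝ) ≤ (TA.card : ℝ) * (TV.card : ℝ) ^ R := hcard1
      _ ≤ Q ^ (N * R) * (Q ^ M) ^ R := by
          apply mul_le_mul hTA' (pow_le_pow_left₀ (by positivity) hTV' R) (by positivity)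
            (by positivity)
      _ = Q ^ (N * R + M * R) := by rw [← pow_mul, ← pow_add]
      _ ≤ Q ^ ((N + M + 1) * R) := by
          apply pow_le_pow_right₀ hQ1
          nlinarith [hR]
  · -- covering property
    intro Θ hrank hentries
    have hfro : ∑ u, ∑ i, Θ u i ^ 2 ≤ D ^ 2 := by
      have hD2 : D ^ 2 = B ^ 2 * ((N:ℝ) * M) := by
        rw [hD, mul_pow, Real.sq_sqrt hNM.le]
      rw [hD2]
      calc ∑ u, ∑ i, Θ u i ^ 2 ≤ ∑ u : Fin N, ∑ i : Fin M, B ^ 2 := by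
            apply Finset.sum_le_sum
            intro u _
            apply Finset.sum_le_sum
            intro i _
            exact pow_le_pow_left₀ (hentries u i).1 (hentries u i).2 2
        _ = B ^ 2 * ((N:ℝ) * M) := by
            simp [Finset.sum_const]
            ring
    obtain ⟨A, W, hΘAW, hAorth, hAfro, hWorth, hWnorm⟩ := exists_factorization R Θ hrank
    have hASA : A ∈ SA := ⟨hAorth, le_trans hAfro hfro⟩
    obtain ⟨t, htTA, htdist⟩ := hTAnet (toE A) ⟨A, hASA, rfl⟩
    obtain ⟨A'', hA''SA, hA''eq⟩ := hTAsub htTA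
    -- rows of W
    set w : Fin R → EuclideanSpace ℝ (Fin M) := fun j => WithLp.toLp 2 (fun i => W j i) with hw
    have hwball : ∀ j, w j ∈ Metric.closedBall (0 : EuclideanSpace ℝ (Fin M)) 1 := by
      intro j
      rw [Metric.mem_closedBall, dist_zero_right, EuclideanSpace.norm_eq]
      refine Real.sqrt_le_one.mpr ?_
      calc ∑ i, ‖w j i‖ ^ 2 = ∑ i, W j i ^ 2 := by
            refine Finset.sum_congr rfl fun i _ => ?_
            rw [Real.norm_eq_abs, sq_abs]
        _ ≤ 1 := hWnorm j
    have hchoice : ∀ j, ∃ tv ∈ TV, dist (w j) tv ≤ α/(2*D) := fun j => hTVnet (w j) (hwball j)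
    choose f hf1 hf2 using hchoice
    set W' : Matrix (Fin R) (Fin M) ℝ := rowsOf f with hW'
    refine ⟨fromE t * W', ?_, ?_⟩
    · apply Finset.mem_image.mpr
      refine ⟨(t, f), ?_, rfl⟩
      rw [Finset.mem_product]
      exact ⟨htTA, Fintype.mem_piFinset.mpr hf1⟩
    · -- distance bound
      have hfromE : fromE t = A'' := by rw [← hA''eq, fromE_toE]
      have hsplit : Θ - fromE t * W' = (A - A'') * W + A'' * (W - W') := by
        rw [hΘAW, hfromE, Matrix.sub_mul, Matrix.mul_sub]
        abel
      rw [hsplit]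
      have htri : frobNorm ((A - A'') * W + A'' * (W - W'))
          ≤ frobNorm ((A - A'') * W) + frobNorm (A'' * (W - W')) := by
        rw [frobNorm_eq, frobNorm_eq, frobNorm_eq]
        rw [show toE ((A - A'') * W + A'' * (W - W')) = toE ((A - A'') * W) + toE (A'' * (W - W')) from rfl]
        exact norm_add_le _ _
      have hfrod : frobNorm (A - A'') ≤ α / 2 := by
        rw [frobNorm_eq, toE_sub, hA''eq, ← dist_eq_norm]
        exact htdist
      have hbound1 : frobNorm ((A - A'') * W) ≤ α / 2 := by
        apply frobNorm_le_of_sq _ (by positivity)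
        rw [frob_mul_sq_rows _ _ hWorth]
        calc ∑ j, (∑ u, (A - A'') u j ^ 2) * (∑ i, W j i ^ 2)
            ≤ ∑ j, (∑ u, (A - A'') u j ^ 2) * 1 := by
              apply Finset.sum_le_sum
              intro j _
              exact mul_le_mul_of_nonneg_left (hWnorm j) (by positivity)
          _ = ∑ j, ∑ u, (A - A'') u j ^ 2 := by simp
          _ = ∑ u, ∑ j, (A - A'') u j ^ 2 := Finset.sum_comm
          _ ≤ (α/2) ^ 2 := by
              have := hfrod
              have h2 : frobNorm (A - A'') ^ 2 ≤ (α/2)^2 := by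
                apply pow_le_pow_left₀ (frobNorm_nonneg _) this
              rwa [frobNorm_sq] at h2
      have hbound2 : frobNorm (A'' * (W - W')) ≤ α / 2 := by
        apply frobNorm_le_of_sq _ (by positivity)
        rw [frob_mul_sq_cols _ _ hA''SA.1]
        have hrow : ∀ j, ∑ i, (W - W') j i ^ 2 ≤ (α/(2*D))^2 := by
          intro j
          have hd := hf2 j
          have h1 : dist (w j) (f j) ^ 2 ≤ (α/(2*D))^2 :=
            pow_le_pow_left₀ dist_nonneg hd 2
          have h2 : dist (w j) (f j) ^ 2 = ∑ i, (W - W') j i ^ 2 := by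
            rw [EuclideanSpace.dist_eq, Real.sq_sqrt (by positivity)]
            refine Finset.sum_congr rfl fun i _ => ?_
            rw [Real.dist_eq, sq_abs]
            simp [hw, hW', rowsOf, Matrix.sub_apply]
          rwa [h2] at h1
        calc ∑ j, (∑ u, A'' u j ^ 2) * (∑ i, (W - W') j i ^ 2)
            ≤ ∑ j, (∑ u, A'' u j ^ 2) * (α/(2*D))^2 := by
              apply Finset.sum_le_sum
              intro j _
              exact mul_le_mul_of_nonneg_left (hrow j) (by positivity)
          _ = (∑ j, ∑ u, A'' u j ^ 2) * (α/(2*D))^2 := by rw [Finset.sum_mul]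
          _ ≤ D^2 * (α/(2*D))^2 := by
              apply mul_le_mul_of_nonneg_right hA''SA.2 (by positivity)
          _ = (α/2)^2 := by
              field_simp
      calc frobNorm ((A - A'') * W + A'' * (W - W'))
          ≤ frobNorm ((A - A'') * W) + frobNorm (A'' * (W - W')) := htri
        _ ≤ α/2 + α/2 := add_le_add hbound1 hbound2
        _ = α := by ring
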